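/- Let B, C, D ∈ ℂ with C ≠ 0, and set ψ(z) = C·e^{Dz}, φ(z) = z + B, ψ̂(z) = conj(C)·e^{conj(B)·z}, φ̂(z) = z + conj(D). If ∫_ℂ |ψ̂(z)·f(φ̂(z))|²·e^{−|z|²} dV(z) = ∫_ℂ |ψ(z)·f(φ(z))|²·e^{−|z|²} dV(z) for every entire function f ∈ F², then |D| = |B|. (This is the necessity of |D| = |B| for normality of W_{ψ,φ,max} in the translation case A = 1.) -/

import Mathlib

open scoped ENNReal

open MeasureTheory Complex ComplexConjugate

/-- The Gaussian lintegral over `ℂ` is finite. -/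
lemma gauss_lintegral_lt_top :
    (∫⁻ z : ℂ, ENNReal.ofReal (Real.exp (-(‖z‖) ^ 2))) < ⊤ := by
  have h1 : (∫⁻ z : ℂ, ENNReal.ofReal (Real.exp (-(‖z‖) ^ 2)))
      = ∫⁻ p : ℝ × ℝ, ENNReal.ofReal (Real.exp (-p.1 ^ 2)) *
          ENNReal.ofReal (Real.exp (-p.2 ^ 2)) := by
    rw [← Complex.volume_preserving_equiv_real_prod.lintegral_comp (by fun_prop)]
    congr 1
    ext z
    rw [← ENNReal.ofReal_mul (Real.exp_pos _).le, ← Real.exp_add]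
    congr 2
    simp [Complex.sq_norm, Complex.normSq_apply, Complex.measurableEquivRealProd,
      Complex.equivRealProdLm, Complex.equivRealProd]
    ring
  have h2 := lintegral_prod_mul (μ := (volume : Measure ℝ)) (ν := (volume : Measure ℝ))
    (f := fun x => ENNReal.ofReal (Real.exp (-x ^ 2)))
    (g := fun x => ENNReal.ofReal (Real.exp (-x ^ 2))) (by fun_prop) (by fun_prop)
  rw [h1, MeasureTheory.Measure.volume_eq_prod, h2]
  have hI : (∫⁻ x : ℝ, ENNReal.ofReal (Real.exp (-x ^ 2))) < ⊤ := by
    have hint : Integrable (fun x : ℝ => Real.exp (-1 * x ^ 2)) :=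
      integrable_exp_neg_mul_sq one_pos
    have := (hasFiniteIntegral_iff_ofReal (Filter.Eventually.of_forall fun x =>
      (Real.exp_pos _).le)).mp hint.hasFiniteIntegral
    simpa using this
  exact ENNReal.mul_lt_top hI hI

/-- Key computation: translated Gaussian lintegral. -/
lemma gauss_shift (w : ℂ) :
    (∫⁻ z : ℂ, ENNReal.ofReal
        (Real.exp (2 * ((conj w) * z).re) * Real.exp (-(‖z‖) ^ 2)))
      = ENNReal.ofReal (Real.exp ((‖w‖) ^ 2)) *
          ∫⁻ z : ℂ, ENNReal.ofReal (Real.exp (-(‖z‖) ^ 2)) := by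
  set G : ℂ → ENNReal := fun z => ENNReal.ofReal
    (Real.exp (2 * ((conj w) * z).re) * Real.exp (-(‖z‖) ^ 2)) with hG
  have key : ∀ z : ℂ, G (z + w) =
      ENNReal.ofReal (Real.exp ((‖w‖) ^ 2)) *
        ENNReal.ofReal (Real.exp (-(‖z‖) ^ 2)) := by
    intro z
    rw [hG]
    simp only
    rw [← ENNReal.ofReal_mul (Real.exp_pos _).le, ← Real.exp_add, ← Real.exp_add]
    congr 2
    have h1 : (‖z + w‖) ^ 2
        = (‖z‖) ^ 2 + 2 * ((conj w) * z).re + (‖w‖) ^ 2 := by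
      simp only [Complex.sq_norm, Complex.normSq_apply, Complex.add_re, Complex.add_im,
        Complex.mul_re, Complex.conj_re, Complex.conj_im]
      ring
    have h2 : ((conj w) * (z + w)).re
        = ((conj w) * z).re + (‖w‖) ^ 2 := by
      simp only [Complex.sq_norm, Complex.normSq_apply, Complex.mul_re, Complex.add_re,
        Complex.add_im, Complex.conj_re, Complex.conj_im]
      ring
    rw [h2, h1]
    ring
  calc (∫⁻ z : ℂ, G z) = ∫⁻ z : ℂ, G (z + w) := (lintegral_add_right_eq_self G w).symm
    _ = ∫⁻ z : ℂ, ENNReal.ofReal (Real.exp ((‖w‖) ^ 2)) *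
          ENNReal.ofReal (Real.exp (-(‖z‖) ^ 2)) := by simp_rw [key]
    _ = _ := lintegral_const_mul' _ _ ENNReal.ofReal_ne_top

/-- necessity of `|D| = |B|` for normality in the translation case `A = 1`. -/
theorem wco_normal_necessary_translation (B C D : ℂ) (hC : C ≠ 0)
    (ψ φ ψh φh : ℂ → ℂ)
    (hψ : ∀ z : ℂ, ψ z = C * Complex.exp (D * z))
    (hφ : ∀ z : ℂ, φ z = z + B)
    (hψh : ∀ z : ℂ, ψh z = conj C * Complex.exp (conj B * z))
    (hφh : ∀ z : ℂ, φh z = z + conj D)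
    (heq : ∀ f : ℂ → ℂ, Differentiable ℂ f →
      (∫⁻ z : ℂ, ENNReal.ofReal
          ((‖f z‖) ^ 2 * Real.exp (-(‖z‖) ^ 2)) < ⊤) →
      ∫⁻ z : ℂ, ENNReal.ofReal
          ((‖ψh z * f (φh z)‖) ^ 2 * Real.exp (-(‖z‖) ^ 2)) =
        ∫⁻ z : ℂ, ENNReal.ofReal
          ((‖ψ z * f (φ z)‖) ^ 2 * Real.exp (-(‖z‖) ^ 2))) :
    ‖D‖ = ‖B‖ := by
  set I : ENNReal := ∫⁻ z : ℂ, ENNReal.ofReal (Real.exp (-(‖z‖) ^ 2)) with hI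
  have hItop : I ≠ ⊤ := gauss_lintegral_lt_top.ne
  have hIpos : I ≠ 0 := by
    have hmeas : Measurable (fun z : ℂ => ENNReal.ofReal (Real.exp (-(‖z‖) ^ 2))) := by
      exact (Continuous.measurable (by continuity)).ennreal_ofReal
    have hsupp : Function.support (fun z : ℂ => ENNReal.ofReal (Real.exp (-(‖z‖) ^ 2)))
        = Set.univ := by
      ext z
      simp [Function.support, ENNReal.ofReal_eq_zero, not_le, Real.exp_pos]
    have hpos : 0 < I := by
      rw [hI, lintegral_pos_iff_support hmeas, hsupp]
      exact MeasureTheory.Measure.measure_univ_pos.mpr (NeZero.ne _)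
    exact hpos.ne'
  have h1 := heq (fun _ => 1) (differentiable_const 1) (by
    simpa using gauss_lintegral_lt_top)
  -- rewrite both sides
  have habs : ∀ (c w z : ℂ), (‖c * Complex.exp (w * z) * 1‖) ^ 2 *
      Real.exp (-(‖z‖) ^ 2)
      = (‖c‖) ^ 2 * (Real.exp (2 * (w * z).re) * Real.exp (-(‖z‖) ^ 2)) := by
    intro c w z
    rw [mul_one, norm_mul, mul_pow, Complex.norm_exp, ← Real.exp_nat_mul]
    push_cast
    ring_nf
  have hL : (∫⁻ z : ℂ, ENNReal.ofReal
        ((‖ψh z * (fun _ => (1:ℂ)) (φh z)‖) ^ 2 * Real.exp (-(‖z‖) ^ 2)))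
      = ENNReal.ofReal ((‖C‖) ^ 2) *
          (ENNReal.ofReal (Real.exp ((‖B‖) ^ 2)) * I) := by
    rw [← gauss_shift B]
    rw [← lintegral_const_mul' _ _ ENNReal.ofReal_ne_top]
    congr 1
    ext z
    rw [hψh, habs, ENNReal.ofReal_mul (by positivity)]
    simp
  have hR : (∫⁻ z : ℂ, ENNReal.ofReal
        ((‖ψ z * (fun _ => (1:ℂ)) (φ z)‖) ^ 2 * Real.exp (-(‖z‖) ^ 2)))
      = ENNReal.ofReal ((‖C‖) ^ 2) *
          (ENNReal.ofReal (Real.exp ((‖D‖) ^ 2)) * I) := by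
    have hDD : (conj (conj D)) = D := by simp
    have := gauss_shift (conj D)
    rw [hDD] at this
    rw [Complex.norm_conj] at this
    rw [← this]
    rw [← lintegral_const_mul' _ _ ENNReal.ofReal_ne_top]
    congr 1
    ext z
    rw [hψ, habs, ENNReal.ofReal_mul (by positivity)]
  rw [hL, hR] at h1
  -- cancel |C|² and I
  have hCne : ENNReal.ofReal ((‖C‖) ^ 2) ≠ 0 := by
    simpa [ENNReal.ofReal_eq_zero, not_le] using hC
  have h2 : ENNReal.ofReal (Real.exp ((‖B‖) ^ 2)) * I
      = ENNReal.ofReal (Real.exp ((‖D‖) ^ 2)) * I :=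
    (ENNReal.mul_right_inj hCne ENNReal.ofReal_ne_top).mp h1
  have h3 : ENNReal.ofReal (Real.exp ((‖B‖) ^ 2))
      = ENNReal.ofReal (Real.exp ((‖D‖) ^ 2)) :=
    (ENNReal.mul_left_inj hIpos hItop).mp h2
  have h4 : Real.exp ((‖B‖) ^ 2) = Real.exp ((‖D‖) ^ 2) := by
    have := ENNReal.ofReal_eq_ofReal_iff (Real.exp_pos _).le (Real.exp_pos _).le |>.mp h3
    exact this
  have h5 : (‖B‖) ^ 2 = (‖D‖) ^ 2 := Real.exp_injective h4
  nlinarith [norm_nonneg B, norm_nonneg D, h5]
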